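/- (Embedding a colored star forest into a jumbled family) Let 0 < c < 1, D ≥ 3, and 𝒢 = {G_1,...,G_t} a family of (p,β)-jumbled graphs on vertex set V. Let Δ ≤ (1−c)p|V| be a positive integer, s = 2t^{1/2}βp^{-1}, and ℱ a [t]-edge-colored star forest with Δ(ℱ) ≤ Δ and |V(ℱ)| + 5sD < c|V|/2. Then there is V' ⊆ V with |V'| ≥ |V| − s and a (2s,D)-good embedding of ℱ into 𝒢 restricted to V'. -/

import Mathlib

open Finset
open scoped Classical

noncomputable section

/-- Number of ordered adjacent pairs between `X` and `Y` in the graph `G`. -/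
def epairs {V : Type*} (G : SimpleGraph V) (X Y : Finset V) : ℕ :=
  ((X ×ˢ Y).filter fun p => G.Adj p.1 p.2).card

/-- `G` is `(p,β)`-jumbled. -/
def IsJumbled {V : Type*} (G : SimpleGraph V) (p β : ℝ) : Prop :=
  ∀ X Y : Finset V,
    |(epairs G X Y : ℝ) - p * X.card * Y.card| ≤ β * Real.sqrt (X.card * Y.card)

/-- `G` is `s`-joined. -/
def IsJoined {V : Type*} (G : SimpleGraph V) (s : ℕ) : Prop :=
  ∀ X Y : Finset V, s ≤ X.card → s ≤ Y.card → 0 < epairs G X Y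

/-- Ordered adjacent pairs between `X ⊆ V × [t]` and `Y ⊆ V` in the auxiliary
bipartite graph of the family `𝒢`. -/
def famPairs {V : Type*} {t : ℕ} (𝒢 : Fin t → SimpleGraph V)
    (X : Finset (V × Fin t)) (Y : Finset V) : ℕ :=
  ((X ×ˢ Y).filter fun p => (𝒢 p.1.2).Adj p.1.1 p.2).card

/-- The family `𝒢` is `(p,β)`-jumbled (its auxiliary bipartite graph is bijumbled). -/
def FamJumbled {V : Type*} {t : ℕ} (𝒢 : Fin t → SimpleGraph V) (p β : ℝ) : Prop :=
  ∀ (X : Finset (V × Fin t)) (Y : Finset V),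
    |(famPairs 𝒢 X Y : ℝ) - p * X.card * Y.card| ≤ β * Real.sqrt (X.card * Y.card)

/-- The family `𝒢` is `s`-joined (its auxiliary bipartite graph is bijoined). -/
def FamJoined {V : Type*} {t : ℕ} (𝒢 : Fin t → SimpleGraph V) (s : ℕ) : Prop :=
  ∀ (X : Finset (V × Fin t)) (Y : Finset V), s ≤ X.card → s ≤ Y.card →
    0 < famPairs 𝒢 X Y

/-- `Γ_𝒢(X)`: the family neighbourhood of `X ⊆ V × [t]`. -/
def famNbhd {V : Type*} [Fintype V] {t : ℕ} (𝒢 : Fin t → SimpleGraph V)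
    (X : Finset (V × Fin t)) : Finset V :=
  univ.filter fun v => ∃ p ∈ X, (𝒢 p.2).Adj p.1 v

/-- A `[t]`-edge-coloured rooted graph: colour classes `graph i`, a set of roots,
and for each non-root vertex a parent joined to it by an edge of colour `parentColor`. -/
structure ColoredRootedGraph (A : Type*) (t : ℕ) where
  graph : Fin t → SimpleGraph A
  isRoot : A → Bool
  parent : A → A
  parentColor : A → Fin t
  parent_adj : ∀ a, isRoot a = false → (graph (parentColor a)).Adj a (parent a)

/-- The degree of `a` in colour `i` within the vertex subset `S`. -/
def monDegOn {A : Type*} {t : ℕ} (H : Fin t → SimpleGraph A)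
    (S : Finset A) (a : A) (i : Fin t) : ℕ :=
  (S.filter fun b => (H i).Adj a b).card

/-- `φ` is an embedding of the colour classes `H` into the family `𝒢`. -/
def IsColEmbedding {A V : Type*} {t : ℕ} (𝒢 : Fin t → SimpleGraph V)
    (H : Fin t → SimpleGraph A) (φ : A → V) : Prop :=
  Function.Injective φ ∧ ∀ i a b, (H i).Adj a b → (𝒢 i).Adj (φ a) (φ b)

/-- `P_φ(ℋ)` relative to the vertex subset `S`: pairs `(φ h, i)` with `h ∈ S` a
non-root vertex and `i` the colour of the edge from `h` to its parent. -/
def Pset {A V : Type*} {t : ℕ} (ℋ : ColoredRootedGraph A t)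
    (S : Finset A) (φ : A → V) : Finset (V × Fin t) :=
  (S.filter fun a => ℋ.isRoot a = false).image fun a => (φ a, ℋ.parentColor a)

/-- The quantity `R(X,φ)` for the embedding `φ` of the part of `ℋ` induced on `S`
into the family `𝒢` restricted to `V'`. -/
def Rfun {A V : Type*} [Fintype V] {t : ℕ} (𝒢 : Fin t → SimpleGraph V)
    (V' : Finset V) (ℋ : ColoredRootedGraph A t) (S : Finset A) (φ : A → V) (D : ℕ)
    (X : Finset (V × Fin t)) : ℤ :=
  (((famNbhd 𝒢 X ∩ V')) \ (S.image φ)).card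
    - ∑ p ∈ X, ((D : ℤ) - ∑ a ∈ S.filter (fun a => φ a = p.1), (monDegOn ℋ.graph S a p.2 : ℤ))
    - ((Pset ℋ S φ) ∩ X).card

/-- `φ` is an `(s,D)`-good embedding (of the part of `ℋ` on `S`, into `𝒢` restricted
to `V'`): `R(X,φ) ≥ 0` for every `X ⊆ V' × [t]` with `|X| ≤ s`. -/
def IsGood {A V : Type*} [Fintype V] {t : ℕ} (𝒢 : Fin t → SimpleGraph V)
    (V' : Finset V) (ℋ : ColoredRootedGraph A t) (S : Finset A) (φ : A → V)
    (s : ℝ) (D : ℕ) : Prop :=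
  ∀ X : Finset (V × Fin t), (∀ p ∈ X, p.1 ∈ V') → (X.card : ℝ) ≤ s →
    0 ≤ Rfun 𝒢 V' ℋ S φ D X


/-! ### Auxiliary lemmas -/

section S1
variable {V : Type*} {G : SimpleGraph V} {p β : ℝ}

lemma epairs_eq_sum (G : SimpleGraph V) (B Z : Finset V) :
    epairs G B Z = ∑ u ∈ B, (Z.filter (G.Adj u)).card := by
  classical
  unfold epairs
  rw [Finset.card_filter, Finset.sum_product]
  congr 1
  ext u
  rw [Finset.card_filter]

lemma jumbled_lower (hG : IsJumbled G p β) (X Y : Finset V) :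
    p * X.card * Y.card - β * Real.sqrt (X.card * Y.card) ≤ (epairs G X Y : ℝ) := by
  have h := hG X Y
  have := abs_le.1 h
  linarith [this.1]

/-- If there are no edges between `X` and `Y`, then `|X||Y| ≤ β²/p²`. -/
lemma zero_pairs (hG : IsJumbled G p β) (hp : 0 < p) (hβ : 0 ≤ β) (X Y : Finset V)
    (h : epairs G X Y = 0) :
    (X.card : ℝ) * Y.card ≤ β ^ 2 / p ^ 2 := by
  have h1 := jumbled_lower hG X Y
  rw [h] at h1
  push_cast at h1
  -- p * x * y ≤ β * sqrt (x y)
  set x : ℝ := (X.card : ℝ) with hx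
  set y : ℝ := (Y.card : ℝ) with hy
  have hx0 : (0:ℝ) ≤ x := Nat.cast_nonneg _
  have hy0 : (0:ℝ) ≤ y := Nat.cast_nonneg _
  have hxy : 0 ≤ x * y := mul_nonneg hx0 hy0
  rcases eq_or_lt_of_le hxy with he | hlt
  · rw [← he]; positivity
  · set r := Real.sqrt (x * y) with hr
    have hs : 0 < r := Real.sqrt_pos.2 hlt
    have h3 : x * y = r * r := (Real.mul_self_sqrt hxy).symm
    have h2 : p * (r * r) ≤ β * r := by rw [← h3]; nlinarith
    have h4 : p * r ≤ β := by nlinarith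
    have h5 : r ≤ β / p := by rw [le_div_iff₀ hp]; linarith
    have hβp : 0 ≤ β / p := le_trans (le_of_lt hs) h5
    calc x * y = r * r := h3
      _ ≤ (β / p) * (β / p) := mul_le_mul h5 h5 (le_of_lt hs) hβp
      _ = β ^ 2 / p ^ 2 := by ring

/-- Counting vertices with low degree into `Z`. -/
lemma lowdeg_bound (hG : IsJumbled G p β) (hβ0 : 0 ≤ β) (Z B : Finset V) (d : ℕ)
    (hB : ∀ u ∈ B, (Z.filter (G.Adj u)).card ≤ d) (M : ℝ) (hM : 0 < M)
    (hMle : M ≤ p * Z.card - d) :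
    (B.card : ℝ) * M ^ 2 ≤ β ^ 2 * Z.card := by
  have he : (epairs G B Z : ℝ) ≤ (B.card : ℝ) * d := by
    rw [epairs_eq_sum]
    push_cast
    calc (∑ u ∈ B, ((Z.filter (G.Adj u)).card : ℝ)) ≤ ∑ u ∈ B, (d:ℝ) := by
          apply Finset.sum_le_sum
          intro u hu
          exact_mod_cast hB u hu
      _ = (B.card : ℝ) * d := by rw [Finset.sum_const, nsmul_eq_mul]
  have h1 := jumbled_lower hG B Z
  set x : ℝ := (B.card : ℝ) with hx
  set z : ℝ := (Z.card : ℝ) with hz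
  have hx0 : (0:ℝ) ≤ x := Nat.cast_nonneg _
  have hz0 : (0:ℝ) ≤ z := Nat.cast_nonneg _
  have h2 : x * M ≤ β * Real.sqrt (x * z) := by
    have : x * (p * z - d) ≤ β * Real.sqrt (x * z) := by nlinarith
    nlinarith [mul_le_mul_of_nonneg_left hMle hx0]
  rcases eq_or_lt_of_le hx0 with he0 | hx0'
  · rw [← he0, zero_mul]
    exact mul_nonneg (sq_nonneg β) hz0
  · have hsqx : Real.sqrt x > 0 := Real.sqrt_pos.2 hx0'
    have hsplit : Real.sqrt (x * z) = Real.sqrt x * Real.sqrt z := Real.sqrt_mul hx0 z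
    have h3 : Real.sqrt x * Real.sqrt x = x := Real.mul_self_sqrt hx0
    have h4 : Real.sqrt x * M ≤ β * Real.sqrt z := by
      rw [hsplit] at h2
      nlinarith
    have h5 : Real.sqrt z * Real.sqrt z = z := Real.mul_self_sqrt hz0
    have h6 := mul_self_le_mul_self (by positivity) h4
    nlinarith [h6, h3, h5]

end S1

section S2
variable {V : Type*} [Fintype V] {t : ℕ} {𝒢 : Fin t → SimpleGraph V} {p β : ℝ}

lemma mem_famNbhd {X : Finset (V × Fin t)} {y : V} :
    y ∈ famNbhd 𝒢 X ↔ ∃ q ∈ X, (𝒢 q.2).Adj q.1 y := by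
  simp [famNbhd]

lemma famNbhd_union (X Y : Finset (V × Fin t)) :
    famNbhd 𝒢 (X ∪ Y) = famNbhd 𝒢 X ∪ famNbhd 𝒢 Y := by
  ext y
  simp only [mem_famNbhd, Finset.mem_union]
  constructor
  · rintro ⟨q, hq | hq, ha⟩
    · exact Or.inl ⟨q, hq, ha⟩
    · exact Or.inr ⟨q, hq, ha⟩
  · rintro (⟨q, hq, ha⟩ | ⟨q, hq, ha⟩)
    · exact ⟨q, Or.inl hq, ha⟩
    · exact ⟨q, Or.inr hq, ha⟩

lemma famNbhd_empty : famNbhd 𝒢 (∅ : Finset (V × Fin t)) = ∅ := by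
  ext y; simp [mem_famNbhd]

lemma fam_zero_pairs (hjum : ∀ i, IsJumbled (𝒢 i) p β) (hp : 0 < p) (hβ : 0 ≤ β)
    (X : Finset (V × Fin t)) (Y : Finset V)
    (h : ∀ q ∈ X, ∀ y ∈ Y, ¬ (𝒢 q.2).Adj q.1 y) :
    (X.card : ℝ) * Y.card ≤ t * (β ^ 2 / p ^ 2) := by
  classical
  have hslice : X.card = ∑ c : Fin t, (X.filter fun q => q.2 = c).card :=
    Finset.card_eq_sum_card_fiberwise (fun q _ => Finset.mem_univ _)
  have hc : ∀ c : Fin t,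
      ((X.filter fun q => q.2 = c).card : ℝ) * Y.card ≤ β ^ 2 / p ^ 2 := by
    intro c
    set Xc := (X.filter fun q => q.2 = c).image Prod.fst with hXc
    have hinj : Set.InjOn (Prod.fst : V × Fin t → V) ↑(X.filter fun q => q.2 = c) := by
      intro q1 h1 q2 h2 he
      simp only [Finset.coe_filter, Set.mem_setOf_eq] at h1 h2
      exact Prod.ext he (h1.2.trans h2.2.symm)
    have hcard : Xc.card = (X.filter fun q => q.2 = c).card :=
      Finset.card_image_of_injOn hinj
    have hz : epairs (𝒢 c) Xc Y = 0 := by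
      unfold epairs
      rw [Finset.card_eq_zero, Finset.filter_eq_empty_iff]
      rintro ⟨v, y⟩ hvy
      simp only [Finset.mem_product] at hvy
      obtain ⟨hv, hy⟩ := hvy
      simp only [hXc, Finset.mem_image, Finset.mem_filter] at hv
      obtain ⟨q, ⟨hqX, hq2⟩, hq1⟩ := hv
      intro hadj
      exact h q hqX y hy (by rw [hq2, hq1]; exact hadj)
    have := zero_pairs (hjum c) hp hβ Xc Y hz
    rwa [hcard] at this
  rw [hslice]
  push_cast
  rw [Finset.sum_mul]
  calc (∑ c : Fin t, ((X.filter fun q => q.2 = c).card : ℝ) * Y.card)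
      ≤ ∑ _c : Fin t, (β ^ 2 / p ^ 2) := Finset.sum_le_sum (fun c _ => hc c)
    _ = t * (β ^ 2 / p ^ 2) := by
        rw [Finset.sum_const, nsmul_eq_mul, Finset.card_univ, Fintype.card_fin]

end S2

section S3
variable {V : Type*} [Fintype V] {t : ℕ} {𝒢 : Fin t → SimpleGraph V} {p β s : ℝ} {D : ℕ}

/-- Main step for the removal process. -/
lemma removal_crux (hjum : ∀ i, IsJumbled (𝒢 i) p β) (hp : 0 < p) (hβ : 0 ≤ β)
    (hs0 : 0 < s) (hseq : (t : ℝ) * (β ^ 2 / p ^ 2) = s ^ 2 / 4)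
    (W₀ : Finset V) (hW₀ : (3 * D + 3.25) * s < W₀.card)
    (Xa X : Finset (V × Fin t))
    (hJ1 : (Xa.card : ℝ) ≤ s)
    (hJ3 : ((famNbhd 𝒢 Xa ∩ (W₀ \ Xa.image Prod.fst)).card : ℝ) ≤ D * Xa.card)
    (hX2s : (X.card : ℝ) ≤ 2 * s)
    (hXV : ∀ q ∈ X, q.1 ∉ Xa.image Prod.fst)
    (hXbad : ((famNbhd 𝒢 X ∩ (W₀ \ Xa.image Prod.fst)).card : ℝ) < D * X.card) :
    ((Xa ∪ X).card : ℝ) ≤ s ∧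
    ((famNbhd 𝒢 (Xa ∪ X) ∩ (W₀ \ (Xa ∪ X).image Prod.fst)).card : ℝ)
      ≤ D * (Xa ∪ X).card := by
  classical
  have hdisj : Disjoint Xa X := by
    rw [Finset.disjoint_right]
    intro q hqX hqXa
    exact hXV q hqX (Finset.mem_image_of_mem Prod.fst hqXa)
  have hcardU : ((Xa ∪ X).card : ℝ) = Xa.card + X.card := by
    rw [Finset.card_union_of_disjoint hdisj]; push_cast; ring
  have himgmono : Xa.image Prod.fst ⊆ (Xa ∪ X).image Prod.fst :=
    Finset.image_subset_image Finset.subset_union_left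
  -- J3 for the union
  have hJ3' : ((famNbhd 𝒢 (Xa ∪ X) ∩ (W₀ \ (Xa ∪ X).image Prod.fst)).card : ℝ)
      ≤ D * (Xa ∪ X).card := by
    rw [famNbhd_union]
    have hsub : (famNbhd 𝒢 Xa ∪ famNbhd 𝒢 X) ∩ (W₀ \ (Xa ∪ X).image Prod.fst)
        ⊆ (famNbhd 𝒢 Xa ∩ (W₀ \ Xa.image Prod.fst))
          ∪ (famNbhd 𝒢 X ∩ (W₀ \ Xa.image Prod.fst)) := by
      intro y hy
      simp only [Finset.mem_inter, Finset.mem_union, Finset.mem_sdiff] at hy ⊢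
      have hW : y ∈ W₀ ∧ y ∉ Xa.image Prod.fst :=
        ⟨hy.2.1, fun hc => hy.2.2 (himgmono hc)⟩
      rcases hy.1 with h | h
      · exact Or.inl ⟨h, hW⟩
      · exact Or.inr ⟨h, hW⟩
    calc (((famNbhd 𝒢 Xa ∪ famNbhd 𝒢 X) ∩ (W₀ \ (Xa ∪ X).image Prod.fst)).card : ℝ)
        ≤ (((famNbhd 𝒢 Xa ∩ (W₀ \ Xa.image Prod.fst))
          ∪ (famNbhd 𝒢 X ∩ (W₀ \ Xa.image Prod.fst))).card : ℝ) := by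
          exact_mod_cast Finset.card_le_card hsub
      _ ≤ ((famNbhd 𝒢 Xa ∩ (W₀ \ Xa.image Prod.fst)).card : ℝ)
          + (famNbhd 𝒢 X ∩ (W₀ \ Xa.image Prod.fst)).card := by
          exact_mod_cast Finset.card_union_le _ _
      _ ≤ D * Xa.card + D * X.card := by
          have := le_of_lt hXbad
          linarith
      _ = D * (Xa ∪ X).card := by rw [hcardU]; ring
  refine ⟨?_, hJ3'⟩
  by_contra hK
  push_neg at hK
  set K : ℝ := ((Xa ∪ X).card : ℝ) with hKdef
  have hK3s : K ≤ 3 * s := by rw [hcardU]; linarith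
  set Y : Finset V := (W₀ \ (Xa ∪ X).image Prod.fst) \ famNbhd 𝒢 (Xa ∪ X) with hY
  have hnoadj : ∀ q ∈ Xa ∪ X, ∀ y ∈ Y, ¬ (𝒢 q.2).Adj q.1 y := by
    intro q hq y hy hadj
    have : y ∈ famNbhd 𝒢 (Xa ∪ X) := mem_famNbhd.2 ⟨q, hq, hadj⟩
    rw [hY, Finset.mem_sdiff] at hy
    exact hy.2 this
  have hzero := fam_zero_pairs hjum hp hβ (Xa ∪ X) Y hnoadj
  rw [hseq] at hzero
  -- |Y| < s / 4
  have hYlt : (Y.card : ℝ) < s / 4 := by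
    have hKpos : 0 < K := lt_trans hs0 hK
    by_contra hY4
    push_neg at hY4
    nlinarith [hzero, hK, hY4, hs0]
  -- cover W₀
  have hcover : W₀ ⊆ ((Xa ∪ X).image Prod.fst)
      ∪ (famNbhd 𝒢 (Xa ∪ X) ∩ (W₀ \ (Xa ∪ X).image Prod.fst)) ∪ Y := by
    intro y hyW
    simp only [Finset.mem_union]
    by_cases h1 : y ∈ (Xa ∪ X).image Prod.fst
    · exact Or.inl (Or.inl h1)
    · by_cases h2 : y ∈ famNbhd 𝒢 (Xa ∪ X)
      · exact Or.inl (Or.inr (by simp [Finset.mem_inter, Finset.mem_sdiff, h2, hyW, h1]))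
      · exact Or.inr (by simp [hY, Finset.mem_sdiff, hyW, h1, h2])
  have himgcard : (((Xa ∪ X).image Prod.fst).card : ℝ) ≤ K := by
    rw [hKdef]
    exact_mod_cast Finset.card_image_le
  have hWbound : (W₀.card : ℝ) ≤ K + D * K + Y.card := by
    calc (W₀.card : ℝ) ≤ ((((Xa ∪ X).image Prod.fst)
          ∪ (famNbhd 𝒢 (Xa ∪ X) ∩ (W₀ \ (Xa ∪ X).image Prod.fst)) ∪ Y).card : ℝ) := by
          exact_mod_cast Finset.card_le_card hcover
      _ ≤ (((Xa ∪ X).image Prod.fst).card : ℝ)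
          + ((famNbhd 𝒢 (Xa ∪ X) ∩ (W₀ \ (Xa ∪ X).image Prod.fst)).card : ℝ)
          + Y.card := by
          have h1 := Finset.card_union_le (((Xa ∪ X).image Prod.fst)
            ∪ (famNbhd 𝒢 (Xa ∪ X) ∩ (W₀ \ (Xa ∪ X).image Prod.fst))) Y
          have h2 := Finset.card_union_le ((Xa ∪ X).image Prod.fst)
            (famNbhd 𝒢 (Xa ∪ X) ∩ (W₀ \ (Xa ∪ X).image Prod.fst))
          exact_mod_cast le_trans h1 (Nat.add_le_add_right h2 _)
      _ ≤ K + D * K + Y.card := by linarith [hJ3']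
  have hD0 : (0:ℝ) ≤ D := Nat.cast_nonneg _
  have hDK : (D:ℝ) * K ≤ (D:ℝ) * (3 * s) := mul_le_mul_of_nonneg_left hK3s hD0
  linarith [hWbound, hYlt, hK3s, hW₀, hDK]

/-- The removal recursion. -/
lemma removal_rec (hjum : ∀ i, IsJumbled (𝒢 i) p β) (hp : 0 < p) (hβ : 0 ≤ β)
    (hs0 : 0 < s) (hseq : (t : ℝ) * (β ^ 2 / p ^ 2) = s ^ 2 / 4)
    (W₀ : Finset V) (hW₀ : (3 * D + 3.25) * s < W₀.card) :
    ∀ (fuel : ℕ) (Xa : Finset (V × Fin t)),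
    (Xa.card : ℝ) ≤ s →
    ((famNbhd 𝒢 Xa ∩ (W₀ \ Xa.image Prod.fst)).card : ℝ) ≤ D * Xa.card →
    (s < (Xa.card : ℝ) + fuel) →
    ∃ Xf : Finset (V × Fin t), (Xf.card : ℝ) ≤ s ∧
      ∀ X : Finset (V × Fin t), (X.card : ℝ) ≤ 2 * s →
        (∀ q ∈ X, q.1 ∉ Xf.image Prod.fst) →
        ((D * X.card : ℝ) ≤ ((famNbhd 𝒢 X ∩ (W₀ \ Xf.image Prod.fst)).card : ℝ)) := by
  intro fuel
  induction fuel with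
  | zero =>
    intro Xa hJ1 _ hfuel
    simp only [Nat.cast_zero, add_zero] at hfuel
    exact absurd hJ1 (not_le.2 hfuel)
  | succ f ih =>
    intro Xa hJ1 hJ3 hfuel
    by_cases hb : ∃ X : Finset (V × Fin t), (X.card : ℝ) ≤ 2 * s ∧
        (∀ q ∈ X, q.1 ∉ Xa.image Prod.fst) ∧
        ((famNbhd 𝒢 X ∩ (W₀ \ Xa.image Prod.fst)).card : ℝ) < D * X.card
    · obtain ⟨X, hX2s, hXV, hXbad⟩ := hb
      have hXne : X.Nonempty := by
        rw [Finset.nonempty_iff_ne_empty]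
        rintro rfl
        rw [famNbhd_empty] at hXbad
        simp at hXbad
      obtain ⟨hJ1', hJ3'⟩ := removal_crux hjum hp hβ hs0 hseq W₀ hW₀ Xa X hJ1 hJ3 hX2s hXV hXbad
      have hdisj : Disjoint Xa X := by
        rw [Finset.disjoint_right]
        intro q hqX hqXa
        exact hXV q hqX (Finset.mem_image_of_mem Prod.fst hqXa)
      have hgrow : Xa.card + 1 ≤ (Xa ∪ X).card := by
        rw [Finset.card_union_of_disjoint hdisj]
        have := Finset.card_pos.2 hXne
        omega
      apply ih (Xa ∪ X) hJ1' hJ3'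
      have : (Xa.card : ℝ) + 1 ≤ ((Xa ∪ X).card : ℝ) := by exact_mod_cast hgrow
      push_cast at hfuel ⊢
      linarith
    · push_neg at hb
      exact ⟨Xa, hJ1, fun X h2s hV => hb X h2s hV⟩

/-- The removal lemma: construction of `V'` and `W`. -/
lemma removal_main (hjum : ∀ i, IsJumbled (𝒢 i) p β) (hp : 0 < p) (hβ : 0 ≤ β)
    (hs0 : 0 < s) (hseq : (t : ℝ) * (β ^ 2 / p ^ 2) = s ^ 2 / 4)
    (W₀ : Finset V) (hW₀ : (3 * D + 3.25) * s < W₀.card) :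
    ∃ R : Finset V, (R.card : ℝ) ≤ s ∧
      ∀ X : Finset (V × Fin t), (X.card : ℝ) ≤ 2 * s →
        (∀ q ∈ X, q.1 ∉ R) →
        ((D * X.card : ℝ) ≤ ((famNbhd 𝒢 X ∩ (W₀ \ R)).card : ℝ)) := by
  obtain ⟨Xf, hXf1, hXf2⟩ := removal_rec hjum hp hβ hs0 hseq W₀ hW₀ (⌈s⌉₊ + 1) ∅
    (by simp; linarith) (by simp [famNbhd_empty]) (by
      push_cast
      have := Nat.le_ceil s
      simp only [Finset.card_empty, Nat.cast_zero, zero_add]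
      linarith)
  refine ⟨Xf.image Prod.fst, le_trans (by exact_mod_cast Finset.card_image_le) hXf1, hXf2⟩

end S3

section S5
variable {V : Type*} [Fintype V] {t : ℕ} {𝒢 : Fin t → SimpleGraph V} {p β : ℝ}

/-- Choice of a root image: a vertex with large degree into `Z` in every colour. -/
lemma root_choice (hjum : ∀ i, IsJumbled (𝒢 i) p β) (hp : 0 < p) (hβ0 : 0 ≤ β)
    (Z : Finset V) (d : ℕ) (hmargin : (d : ℝ) + Real.sqrt t * β < p * Z.card) :
    ∃ u ∈ Z, ∀ c : Fin t, d + 1 ≤ (Z.filter ((𝒢 c).Adj u)).card := by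
  classical
  by_contra h
  push_neg at h
  have ht0 : (0:ℝ) ≤ Real.sqrt t * β := mul_nonneg (Real.sqrt_nonneg _) hβ0
  set M : ℝ := p * Z.card - d with hM
  have hMpos : 0 < M := by rw [hM]; linarith
  have hMgt : Real.sqrt t * β < M := by rw [hM]; linarith
  set B : Fin t → Finset V := fun c => Z.filter (fun u => (Z.filter ((𝒢 c).Adj u)).card ≤ d)
    with hB
  have hZsub : Z ⊆ Finset.univ.biUnion B := by
    intro u hu
    obtain ⟨c, hc⟩ := h u hu
    exact Finset.mem_biUnion.2 ⟨c, Finset.mem_univ _,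
      Finset.mem_filter.2 ⟨hu, Nat.lt_succ_iff.1 hc⟩⟩
  have hZcard : (Z.card : ℝ) ≤ ∑ c : Fin t, ((B c).card : ℝ) := by
    have h1 : Z.card ≤ (Finset.univ.biUnion B).card := Finset.card_le_card hZsub
    have h2 := Finset.card_biUnion_le (s := (Finset.univ : Finset (Fin t))) (t := B)
    have : Z.card ≤ ∑ c : Fin t, (B c).card := le_trans h1 h2
    exact_mod_cast this
  have hBc : ∀ c : Fin t, ((B c).card : ℝ) * M ^ 2 ≤ β ^ 2 * Z.card := by
    intro c
    apply lowdeg_bound (hjum c) hβ0 Z (B c) d _ M hMpos (le_refl _)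
    intro u hu
    exact (Finset.mem_filter.1 hu).2
  have hZpos : (0:ℝ) < Z.card := by
    by_contra hz
    push_neg at hz
    have : (Z.card : ℝ) = 0 := le_antisymm hz (Nat.cast_nonneg _)
    rw [this, mul_zero] at hmargin
    have : (0:ℝ) ≤ (d:ℝ) := Nat.cast_nonneg _
    linarith
  have hsum : (Z.card : ℝ) * M ^ 2 ≤ (t : ℝ) * (β ^ 2 * Z.card) := by
    calc (Z.card : ℝ) * M ^ 2 ≤ (∑ c : Fin t, ((B c).card : ℝ)) * M ^ 2 := by
          apply mul_le_mul_of_nonneg_right hZcard (sq_nonneg M)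
      _ = ∑ c : Fin t, ((B c).card : ℝ) * M ^ 2 := by rw [Finset.sum_mul]
      _ ≤ ∑ _c : Fin t, β ^ 2 * (Z.card : ℝ) := Finset.sum_le_sum (fun c _ => hBc c)
      _ = (t : ℝ) * (β ^ 2 * Z.card) := by
          rw [Finset.sum_const, nsmul_eq_mul, Finset.card_univ, Fintype.card_fin]
  have hsq : (t : ℝ) * β ^ 2 < M ^ 2 := by
    have h1 : (Real.sqrt t * β) ^ 2 < M ^ 2 := by
      apply sq_lt_sq' _ hMgt
      linarith
    have h2 : (Real.sqrt t * β) ^ 2 = (t : ℝ) * β ^ 2 := by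
      rw [mul_pow, Real.sq_sqrt (Nat.cast_nonneg t)]
    linarith
  nlinarith [hsum, hsq, hZpos]

end S5

section S6
variable {A : Type*} [Fintype A] {t : ℕ} (ℱ : ColoredRootedGraph A t)

/-- The leaves attached to a given root. -/
def leavesOf (b : A) : Finset A :=
  Finset.univ.filter (fun a => ℱ.isRoot a = false ∧ ℱ.parent a = b)

/-- The set of roots. -/
def rootsOf : Finset A := Finset.univ.filter (fun a => ℱ.isRoot a = true)

variable {ℱ}

lemma parent_root (hedge : ∀ i a b, (ℱ.graph i).Adj a b →
      (ℱ.isRoot a = true ∧ ℱ.isRoot b = false) ∨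
      (ℱ.isRoot a = false ∧ ℱ.isRoot b = true))
    {a : A} (ha : ℱ.isRoot a = false) : ℱ.isRoot (ℱ.parent a) = true := by
  rcases hedge _ _ _ (ℱ.parent_adj a ha) with ⟨h1, _⟩ | ⟨_, h2⟩
  · rw [ha] at h1; exact absurd h1 (by simp)
  · exact h2

/-- A leaf has a unique incident edge: to its parent, in its parent colour. -/
lemma leaf_unique_edge (hleaf : ∀ a, ℱ.isRoot a = false →
      ∑ i, monDegOn ℱ.graph Finset.univ a i = 1)
    {a : A} (ha : ℱ.isRoot a = false) {i : Fin t} {b : A}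
    (hadj : (ℱ.graph i).Adj a b) : ℱ.parent a = b ∧ ℱ.parentColor a = i := by
  classical
  have hsum := hleaf a ha
  have hpadj := ℱ.parent_adj a ha
  have hpc1 : 1 ≤ monDegOn ℱ.graph Finset.univ a (ℱ.parentColor a) := by
    rw [Nat.one_le_iff_ne_zero, ← Nat.pos_iff_ne_zero]
    apply Finset.card_pos.2
    exact ⟨ℱ.parent a, Finset.mem_filter.2 ⟨Finset.mem_univ _, hpadj⟩⟩
  have hi1 : 1 ≤ monDegOn ℱ.graph Finset.univ a i := by
    rw [Nat.one_le_iff_ne_zero, ← Nat.pos_iff_ne_zero]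
    apply Finset.card_pos.2
    exact ⟨b, Finset.mem_filter.2 ⟨Finset.mem_univ _, hadj⟩⟩
  by_cases hie : i = ℱ.parentColor a
  · -- the degree in colour i is exactly 1, so b = parent a
    have hpadj' : (ℱ.graph i).Adj a (ℱ.parent a) := by rw [hie]; exact hpadj
    have hle : monDegOn ℱ.graph Finset.univ a i ≤ 1 := by
      rw [← hsum]
      exact Finset.single_le_sum (f := fun c => monDegOn ℱ.graph Finset.univ a c)
        (fun c _ => Nat.zero_le _) (Finset.mem_univ i)
    have hcard : (Finset.univ.filter (fun x => (ℱ.graph i).Adj a x)).card ≤ 1 := hle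
    have hmem1 : b ∈ Finset.univ.filter (fun x => (ℱ.graph i).Adj a x) :=
      Finset.mem_filter.2 ⟨Finset.mem_univ _, hadj⟩
    have hmem2 : ℱ.parent a ∈ Finset.univ.filter (fun x => (ℱ.graph i).Adj a x) :=
      Finset.mem_filter.2 ⟨Finset.mem_univ _, hpadj'⟩
    exact ⟨Finset.card_le_one.1 hcard _ hmem2 _ hmem1, hie.symm⟩
  · exfalso
    have h2 : 2 ≤ ∑ c, monDegOn ℱ.graph Finset.univ a c := by
      have hpair : ({i, ℱ.parentColor a} : Finset (Fin t)).sum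
          (fun c => monDegOn ℱ.graph Finset.univ a c) ≤ ∑ c, monDegOn ℱ.graph Finset.univ a c :=
        Finset.sum_le_sum_of_subset (Finset.subset_univ _)
      rw [Finset.sum_pair hie] at hpair
      omega
    omega

/-- The colour-`c` neighbours of a root `b` are its colour-`c` leaves. -/
lemma root_nbrs (hleaf : ∀ a, ℱ.isRoot a = false →
      ∑ i, monDegOn ℱ.graph Finset.univ a i = 1)
    (hedge : ∀ i a b, (ℱ.graph i).Adj a b →
      (ℱ.isRoot a = true ∧ ℱ.isRoot b = false) ∨
      (ℱ.isRoot a = false ∧ ℱ.isRoot b = true))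
    {b : A} (hb : ℱ.isRoot b = true) (c : Fin t) :
    Finset.univ.filter (fun y => (ℱ.graph c).Adj b y)
      = (leavesOf ℱ b).filter (fun a => ℱ.parentColor a = c) := by
  classical
  ext a
  simp only [Finset.mem_filter, Finset.mem_univ, true_and, leavesOf]
  constructor
  · intro hadj
    have haleaf : ℱ.isRoot a = false := by
      rcases hedge _ _ _ hadj with ⟨_, h⟩ | ⟨h, _⟩
      · exact h
      · rw [hb] at h; simp at h
    obtain ⟨hpar, hpc⟩ := leaf_unique_edge hleaf haleaf hadj.symm
    exact ⟨⟨haleaf, hpar⟩, hpc⟩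
  · rintro ⟨⟨haleaf, hpar⟩, hpc⟩
    have := ℱ.parent_adj a haleaf
    rw [hpar, hpc] at this
    exact this.symm

/-- The number of leaves of a root equals its total degree. -/
lemma card_leavesOf (hleaf : ∀ a, ℱ.isRoot a = false →
      ∑ i, monDegOn ℱ.graph Finset.univ a i = 1)
    (hedge : ∀ i a b, (ℱ.graph i).Adj a b →
      (ℱ.isRoot a = true ∧ ℱ.isRoot b = false) ∨
      (ℱ.isRoot a = false ∧ ℱ.isRoot b = true))
    {b : A} (hb : ℱ.isRoot b = true) :
    (leavesOf ℱ b).card = ∑ c, monDegOn ℱ.graph Finset.univ b c := by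
  classical
  have h1 : ∀ c, monDegOn ℱ.graph Finset.univ b c
      = ((leavesOf ℱ b).filter (fun a => ℱ.parentColor a = c)).card := by
    intro c
    unfold monDegOn
    rw [root_nbrs hleaf hedge hb c]
  rw [Finset.sum_congr rfl (fun c _ => h1 c)]
  exact Finset.card_eq_sum_card_fiberwise (fun a _ => Finset.mem_univ _)

end S6

section S7
variable {V A : Type*} [Fintype V] [Fintype A] {t : ℕ} {𝒢 : Fin t → SimpleGraph V}
  {ℱ : ColoredRootedGraph A t} {D : ℕ}

lemma Rfun_base (W : Finset V) (φ : A → V) (X : Finset (V × Fin t)) :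
    Rfun 𝒢 W ℱ (∅ : Finset A) φ D X
      = ((famNbhd 𝒢 X ∩ W).card : ℤ) - D * X.card := by
  unfold Rfun Pset
  simp [Finset.sum_const, mul_comm]

lemma Rfun_congr (W : Finset V) (S : Finset A) (φ φ' : A → V)
    (h : ∀ a ∈ S, φ' a = φ a) (X : Finset (V × Fin t)) :
    Rfun 𝒢 W ℱ S φ' D X = Rfun 𝒢 W ℱ S φ D X := by
  classical
  have himg : S.image φ' = S.image φ := Finset.image_congr (fun a ha => h a ha)
  have hP : Pset ℱ S φ' = Pset ℱ S φ := by
    unfold Pset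
    apply Finset.image_congr
    intro a ha
    simp only [Finset.coe_filter, Set.mem_setOf_eq] at ha
    show (φ' a, ℱ.parentColor a) = (φ a, ℱ.parentColor a)
    rw [h a ha.1]
  have hmid : (∑ p ∈ X, ((D:ℤ) - ∑ a ∈ S.filter (fun a => φ' a = p.1),
        (monDegOn ℱ.graph S a p.2 : ℤ)))
      = ∑ p ∈ X, ((D:ℤ) - ∑ a ∈ S.filter (fun a => φ a = p.1),
        (monDegOn ℱ.graph S a p.2 : ℤ)) := by
    apply Finset.sum_congr rfl
    intro p _
    have hfil : S.filter (fun a => φ' a = p.1) = S.filter (fun a => φ a = p.1) := by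
      apply Finset.filter_congr
      intro a ha
      rw [h a ha]
    rw [hfil]
  unfold Rfun
  rw [himg, hP, hmid]

lemma Rfun_step (W : Finset V) (S : Finset A) (φ : A → V) (a : A) (ha : a ∉ S)
    (hpar : ℱ.isRoot a = false → ℱ.parent a ∈ S)
    (himg : ∀ b ∈ insert a S, φ b ∉ W) (X : Finset (V × Fin t)) :
    Rfun 𝒢 W ℱ S φ D X ≤ Rfun 𝒢 W ℱ (insert a S) φ D X := by
  classical
  set S' := insert a S with hS'
  have hfirst : ∀ T : Finset A, (∀ b ∈ T, φ b ∉ W) →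
      (famNbhd 𝒢 X ∩ W) \ T.image φ = famNbhd 𝒢 X ∩ W := by
    intro T hT
    apply Finset.sdiff_eq_self_of_disjoint
    rw [Finset.disjoint_left]
    intro x hx hximg
    obtain ⟨b, hb, rfl⟩ := Finset.mem_image.1 hximg
    exact hT b hb (Finset.mem_inter.1 hx).2
  have hfirstS := hfirst S (fun b hb => himg b (Finset.mem_insert_of_mem hb))
  have hfirstS' := hfirst S' himg
  have hmono : ∀ (x : A) (c : Fin t), monDegOn ℱ.graph S x c ≤ monDegOn ℱ.graph S' x c :=
    fun x c => Finset.card_le_card (Finset.filter_subset_filter _ (Finset.subset_insert a S))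
  set bitp : (V × Fin t) → ℤ := fun p =>
    if ℱ.isRoot a = false ∧ p = (φ a, ℱ.parentColor a) then 1 else 0 with hbitp
  have hbitp_nonneg : ∀ p, 0 ≤ bitp p := by
    intro p; rw [hbitp]; dsimp only; split <;> norm_num
  have key1 : ∀ p : V × Fin t,
      (∑ x ∈ S.filter (fun x => φ x = p.1), (monDegOn ℱ.graph S x p.2 : ℤ)) + bitp p
      ≤ ∑ x ∈ S'.filter (fun x => φ x = p.1), (monDegOn ℱ.graph S' x p.2 : ℤ) := by
    intro p
    have hbase : (∑ x ∈ S.filter (fun x => φ x = p.1), (monDegOn ℱ.graph S x p.2 : ℤ))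
        ≤ ∑ x ∈ S.filter (fun x => φ x = p.1), (monDegOn ℱ.graph S' x p.2 : ℤ) :=
      Finset.sum_le_sum (fun x _ => by exact_mod_cast hmono x p.2)
    by_cases hcond : ℱ.isRoot a = false ∧ p = (φ a, ℱ.parentColor a)
    · obtain ⟨haleaf, hp⟩ := hcond
      have hafil : a ∉ S.filter (fun x => φ x = p.1) :=
        fun hx => ha (Finset.mem_filter.1 hx).1
      have hfil' : S'.filter (fun x => φ x = p.1)
          = insert a (S.filter (fun x => φ x = p.1)) := by
        rw [hS', Finset.filter_insert, if_pos (by rw [hp])]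
      rw [hfil', Finset.sum_insert hafil]
      have hdeg1 : 1 ≤ monDegOn ℱ.graph S' a p.2 := by
        apply Finset.card_pos.2
        refine ⟨ℱ.parent a, Finset.mem_filter.2 ⟨Finset.mem_insert_of_mem (hpar haleaf), ?_⟩⟩
        have hpa := ℱ.parent_adj a haleaf
        rw [hp]
        exact hpa
      have hb1 : bitp p = 1 := by rw [hbitp]; exact if_pos ⟨haleaf, hp⟩
      have hdeg1' : (1:ℤ) ≤ (monDegOn ℱ.graph S' a p.2 : ℤ) := by exact_mod_cast hdeg1
      rw [hb1]
      linarith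
    · have hb0 : bitp p = 0 := by rw [hbitp]; exact if_neg hcond
      rw [hb0, add_zero]
      refine le_trans hbase (Finset.sum_le_sum_of_subset_of_nonneg
        (Finset.filter_subset_filter _ (Finset.subset_insert a S)) ?_)
      intro x _ _
      positivity
  have keysum : (∑ p ∈ X, ((D:ℤ) - ∑ x ∈ S'.filter (fun x => φ x = p.1),
        (monDegOn ℱ.graph S' x p.2 : ℤ))) + (∑ p ∈ X, bitp p)
      ≤ ∑ p ∈ X, ((D:ℤ) - ∑ x ∈ S.filter (fun x => φ x = p.1),
        (monDegOn ℱ.graph S x p.2 : ℤ)) := by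
    rw [← Finset.sum_add_distrib]
    apply Finset.sum_le_sum
    intro p _
    have := key1 p
    linarith
  have hbitX : (if ℱ.isRoot a = false ∧ (φ a, ℱ.parentColor a) ∈ X then (1:ℤ) else 0)
      ≤ ∑ p ∈ X, bitp p := by
    by_cases hc : ℱ.isRoot a = false ∧ (φ a, ℱ.parentColor a) ∈ X
    · rw [if_pos hc]
      have h1 : bitp (φ a, ℱ.parentColor a) = 1 := by rw [hbitp]; exact if_pos ⟨hc.1, rfl⟩
      calc (1:ℤ) = bitp (φ a, ℱ.parentColor a) := h1.symm
        _ ≤ ∑ p ∈ X, bitp p :=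
            Finset.single_le_sum (fun p _ => hbitp_nonneg p) hc.2
    · rw [if_neg hc]
      exact Finset.sum_nonneg (fun p _ => hbitp_nonneg p)
  have hPset : Pset ℱ S' φ = (if ℱ.isRoot a = false
      then insert (φ a, ℱ.parentColor a) (Pset ℱ S φ) else Pset ℱ S φ) := by
    unfold Pset
    rw [hS', Finset.filter_insert]
    by_cases hr : ℱ.isRoot a = false
    · rw [if_pos hr, if_pos hr, Finset.image_insert]
    · rw [if_neg hr, if_neg hr]
  have keyP : ((Pset ℱ S' φ ∩ X).card : ℤ) ≤ ((Pset ℱ S φ ∩ X).card : ℤ)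
      + (if ℱ.isRoot a = false ∧ (φ a, ℱ.parentColor a) ∈ X then (1:ℤ) else 0) := by
    rw [hPset]
    by_cases hr : ℱ.isRoot a = false
    · rw [if_pos hr]
      by_cases hmem : (φ a, ℱ.parentColor a) ∈ X
      · rw [if_pos ⟨hr, hmem⟩]
        have hsub : insert (φ a, ℱ.parentColor a) (Pset ℱ S φ) ∩ X
            ⊆ insert (φ a, ℱ.parentColor a) (Pset ℱ S φ ∩ X) := by
          intro q hq
          rw [Finset.mem_inter, Finset.mem_insert] at hq
          rcases hq.1 with h | h
          · exact Finset.mem_insert.2 (Or.inl h)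
          · exact Finset.mem_insert.2 (Or.inr (Finset.mem_inter.2 ⟨h, hq.2⟩))
        calc ((insert (φ a, ℱ.parentColor a) (Pset ℱ S φ) ∩ X).card : ℤ)
            ≤ ((insert (φ a, ℱ.parentColor a) (Pset ℱ S φ ∩ X)).card : ℤ) := by
              exact_mod_cast Finset.card_le_card hsub
          _ ≤ ((Pset ℱ S φ ∩ X).card : ℤ) + 1 := by
              exact_mod_cast Finset.card_insert_le _ _
      · rw [if_neg (fun hc => hmem hc.2)]
        have heq : insert (φ a, ℱ.parentColor a) (Pset ℱ S φ) ∩ X = Pset ℱ S φ ∩ X := by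
          ext q
          rw [Finset.mem_inter, Finset.mem_inter, Finset.mem_insert]
          constructor
          · rintro ⟨h | h, hX⟩
            · exact absurd (h ▸ hX) hmem
            · exact ⟨h, hX⟩
          · rintro ⟨h, hX⟩
            exact ⟨Or.inr h, hX⟩
        rw [heq, add_zero]
    · rw [if_neg hr, if_neg (fun hc => hr hc.1), add_zero]
  unfold Rfun
  rw [hfirstS, hfirstS']
  linarith [keysum, hbitX, keyP]

lemma Rfun_W_le (W V' : Finset V) (hWV : W ⊆ V') (S : Finset A) (φ : A → V)
    (X : Finset (V × Fin t)) :
    Rfun 𝒢 W ℱ S φ D X ≤ Rfun 𝒢 V' ℱ S φ D X := by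
  unfold Rfun
  have h1 : ((famNbhd 𝒢 X ∩ W) \ S.image φ).card
      ≤ ((famNbhd 𝒢 X ∩ V') \ S.image φ).card := by
    apply Finset.card_le_card
    apply Finset.sdiff_subset_sdiff _ (le_refl _)
    exact Finset.inter_subset_inter (le_refl _) hWV
  have h1' : (((famNbhd 𝒢 X ∩ W) \ S.image φ).card : ℤ)
      ≤ (((famNbhd 𝒢 X ∩ V') \ S.image φ).card : ℤ) := by exact_mod_cast h1
  linarith

end S7

section S8
variable {V A : Type*} [Fintype V] [Fintype A] {t : ℕ}

/-- The invariant maintained during the greedy embedding. -/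
def GInv (𝒢 : Fin t → SimpleGraph V) (ℱ : ColoredRootedGraph A t) (D : ℕ) (s : ℝ)
    (V' W : Finset V) (S : Finset A) (φ : A → V) : Prop :=
  Set.InjOn φ ↑S ∧
  (∀ a ∈ S, φ a ∈ V' \ W) ∧
  (∀ a ∈ S, ℱ.isRoot a = false → (𝒢 (ℱ.parentColor a)).Adj (φ a) (φ (ℱ.parent a))) ∧
  (∀ a ∈ S, ℱ.isRoot a = false → ℱ.parent a ∈ S) ∧
  (∀ X : Finset (V × Fin t), (∀ q ∈ X, q.1 ∈ V') → (X.card : ℝ) ≤ 2 * s →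
    0 ≤ Rfun 𝒢 W ℱ S φ D X)

lemma Inv_insert {𝒢 : Fin t → SimpleGraph V} {ℱ : ColoredRootedGraph A t} {D : ℕ} {s : ℝ}
    {V' W : Finset V} {S : Finset A} {φ : A → V}
    (hInv : GInv 𝒢 ℱ D s V' W S φ) (a : A) (v : V) (ha : a ∉ S)
    (hpar_mem : ℱ.isRoot a = false → ℱ.parent a ∈ S)
    (hadj : ℱ.isRoot a = false → (𝒢 (ℱ.parentColor a)).Adj v (φ (ℱ.parent a)))
    (hv1 : v ∈ V' \ W) (hv2 : v ∉ S.image φ) :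
    GInv 𝒢 ℱ D s V' W (insert a S) (Function.update φ a v) := by
  classical
  obtain ⟨hinj, himg, hadjS, hparS, hgood⟩ := hInv
  set φ' := Function.update φ a v with hφ'
  have hag : ∀ b ∈ S, φ' b = φ b := by
    intro b hb
    rw [hφ']
    refine Function.update_of_ne ?_ v φ
    intro h
    rw [h] at hb
    exact ha hb
  have hφ'a : φ' a = v := Function.update_self a v φ
  refine ⟨?_, ?_, ?_, ?_, ?_⟩
  · -- injectivity
    intro x hx y hy hxy
    simp only [Finset.coe_insert, Set.mem_insert_iff, Finset.mem_coe] at hx hy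
    rcases hx with rfl | hx <;> rcases hy with rfl | hy
    · rfl
    · exfalso
      rw [hφ'a, hag y hy] at hxy
      exact hv2 (hxy ▸ Finset.mem_image_of_mem φ hy)
    · exfalso
      rw [hφ'a, hag x hx] at hxy
      exact hv2 (hxy.symm ▸ Finset.mem_image_of_mem φ hx)
    · exact hinj hx hy (by rwa [hag x hx, hag y hy] at hxy)
  · -- images in V' \ W
    intro b hb
    rcases Finset.mem_insert.1 hb with rfl | hb
    · rwa [hφ'a]
    · rw [hag b hb]; exact himg b hb
  · -- adjacency to parents
    intro b hb hbleaf
    rcases Finset.mem_insert.1 hb with rfl | hb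
    · have hpmem := hpar_mem hbleaf
      have hpar_ne : ℱ.parent b ≠ b := fun h => ha (h ▸ hpmem)
      rw [hφ'a, hag _ hpmem]
      exact hadj hbleaf
    · have hpmem := hparS b hb hbleaf
      have : ℱ.parent b ≠ a := fun h => ha (h ▸ hpmem)
      rw [hag b hb, hag _ hpmem]
      exact hadjS b hb hbleaf
  · -- parent closure
    intro b hb hbleaf
    rcases Finset.mem_insert.1 hb with rfl | hb
    · exact Finset.mem_insert_of_mem (hpar_mem hbleaf)
    · exact Finset.mem_insert_of_mem (hparS b hb hbleaf)
  · -- goodness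
    intro X hXV hX2s
    have h1 : Rfun 𝒢 W ℱ S φ' D X = Rfun 𝒢 W ℱ S φ D X := Rfun_congr W S φ φ' hag X
    have h2 : Rfun 𝒢 W ℱ S φ' D X ≤ Rfun 𝒢 W ℱ (insert a S) φ' D X := by
      apply Rfun_step W S φ' a ha hpar_mem _ X
      intro b hb
      rcases Finset.mem_insert.1 hb with rfl | hb
      · rw [hφ'a]
        exact (Finset.mem_sdiff.1 hv1).2
      · rw [hag b hb]
        exact (Finset.mem_sdiff.1 (himg b hb)).2
    have h3 := hgood X hXV hX2s
    rw [h1] at h2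
    linarith
end S8

section S9
variable {V A : Type*} [Fintype V] [Fintype A] {t : ℕ}
variable {𝒢 : Fin t → SimpleGraph V} {ℱ : ColoredRootedGraph A t} {D : ℕ} {s : ℝ}

/-- Embedding the leaves of a single star. -/
lemma star_fill (V' W : Finset V) (b : A) (u : V)
    (Sb : Finset A) (hbSb : b ∈ Sb)
    (hSb_no_leaf : ∀ a ∈ leavesOf ℱ b, a ∉ Sb)
    (Im₀ : Finset V)
    (hpools : ∀ c : Fin t,
      (leavesOf ℱ b).card + 1 ≤ (((V' \ W) \ Im₀).filter ((𝒢 c).Adj u)).card) :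
    ∀ (j : ℕ) (T : Finset A) (φ : A → V), T ⊆ leavesOf ℱ b →
      (leavesOf ℱ b \ T).card = j →
      Sb.image φ = Im₀ → φ b = u →
      GInv 𝒢 ℱ D s V' W (Sb ∪ T) φ →
      ∃ φ', GInv 𝒢 ℱ D s V' W (Sb ∪ leavesOf ℱ b) φ' := by
  classical
  intro j
  induction j with
  | zero =>
    intro T φ hT hcard _ _ hInv
    have hsub : leavesOf ℱ b ⊆ T := by
      intro x hx
      by_contra hxT
      have hmem : x ∈ leavesOf ℱ b \ T := Finset.mem_sdiff.2 ⟨hx, hxT⟩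
      rw [Finset.card_eq_zero] at hcard
      rw [hcard] at hmem
      exact absurd hmem (Finset.notMem_empty x)
    have hTeq : T = leavesOf ℱ b := Finset.Subset.antisymm hT hsub
    exact ⟨φ, hTeq ▸ hInv⟩
  | succ j ih =>
    intro T φ hT hcard hIm hub hInv
    have hne : (leavesOf ℱ b \ T).Nonempty := by
      rw [← Finset.card_pos, hcard]; omega
    obtain ⟨ℓ, hℓ⟩ := hne
    rw [Finset.mem_sdiff] at hℓ
    obtain ⟨hℓ1, hℓ2⟩ := hℓ
    have hℓleaf : ℱ.isRoot ℓ = false := by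
      have := Finset.mem_filter.1 hℓ1
      exact this.2.1
    have hℓpar : ℱ.parent ℓ = b := by
      have := Finset.mem_filter.1 hℓ1
      exact this.2.2
    set S := Sb ∪ T with hS
    have hℓS : ℓ ∉ S := by
      rw [hS, Finset.mem_union]
      rintro (h | h)
      · exact hSb_no_leaf ℓ hℓ1 h
      · exact hℓ2 h
    set c := ℱ.parentColor ℓ with hc
    have hSimg : S.image φ = Im₀ ∪ T.image φ := by
      rw [hS, Finset.image_union, hIm]
    have hCsub : (((V' \ W) \ Im₀).filter ((𝒢 c).Adj u)) \ T.image φ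
        ⊆ ((V' \ W) \ S.image φ).filter ((𝒢 c).Adj u) := by
      intro x hx
      rw [Finset.mem_sdiff, Finset.mem_filter, Finset.mem_sdiff] at hx
      rw [Finset.mem_filter, Finset.mem_sdiff, hSimg]
      refine ⟨⟨hx.1.1.1, ?_⟩, hx.1.2⟩
      rw [Finset.mem_union]
      rintro (h | h)
      · exact hx.1.1.2 h
      · exact hx.2 h
    have hTcard : T.card < (leavesOf ℱ b).card := by
      apply Finset.card_lt_card
      rw [Finset.ssubset_iff_of_subset hT]
      exact ⟨ℓ, hℓ1, hℓ2⟩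
    have hCne : (((V' \ W) \ S.image φ).filter ((𝒢 c).Adj u)).Nonempty := by
      rw [← Finset.card_pos]
      have h0 := hpools c
      have himT : (T.image φ).card ≤ T.card := Finset.card_image_le
      have h1 : (((V' \ W) \ Im₀).filter ((𝒢 c).Adj u)).card
          ≤ ((((V' \ W) \ Im₀).filter ((𝒢 c).Adj u)) \ T.image φ).card + (T.image φ).card :=
        Finset.card_le_card_sdiff_add_card
      have h2 := Finset.card_le_card hCsub
      omega
    obtain ⟨v, hv⟩ := hCne
    rw [Finset.mem_filter] at hv
    obtain ⟨hv1, hv2⟩ := hv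
    rw [Finset.mem_sdiff] at hv1
    -- insert ℓ ↦ v
    have hInv' := Inv_insert hInv ℓ v hℓS
      (fun _ => by rw [hℓpar]; exact Finset.mem_union_left _ hbSb)
      (fun _ => by
        rw [hℓpar, hub]
        exact hv2.symm)
      hv1.1 hv1.2
    have hshape : insert ℓ (Sb ∪ T) = Sb ∪ insert ℓ T := by
      ext x
      simp only [Finset.mem_insert, Finset.mem_union]
      tauto
    rw [hS] at hInv'
    rw [hshape] at hInv'
    have hbℓ : b ≠ ℓ := by
      intro h
      rw [h] at hbSb
      exact hSb_no_leaf ℓ hℓ1 hbSb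
    apply ih (insert ℓ T) (Function.update φ ℓ v)
      (Finset.insert_subset hℓ1 hT) ?_ ?_ ?_ hInv'
    · -- cardinality
      rw [Finset.sdiff_insert, Finset.card_erase_of_mem (Finset.mem_sdiff.2 ⟨hℓ1, hℓ2⟩), hcard]
      omega
    · -- image stable on Sb
      rw [← hIm]
      apply Finset.image_congr
      intro x hx
      refine Function.update_of_ne ?_ v φ
      intro h
      rw [h] at hx
      exact hSb_no_leaf ℓ hℓ1 hx
    · -- φ b = u
      rw [Function.update_of_ne hbℓ v φ]
      exact hub
/-- All processed vertices when the roots in `R` are done. -/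
def SfullOf (ℱ : ColoredRootedGraph A t) (R : Finset A) : Finset A :=
  R ∪ R.biUnion (leavesOf ℱ)

lemma mem_rootsOf {b : A} : b ∈ rootsOf ℱ ↔ ℱ.isRoot b = true := by
  simp [rootsOf]

lemma not_mem_Sfull_of_root {R : Finset A} (hR : R ⊆ rootsOf ℱ) {b : A}
    (hb : ℱ.isRoot b = true) (hbR : b ∉ R) : b ∉ SfullOf ℱ R := by
  rw [SfullOf, Finset.mem_union]
  rintro (h | h)
  · exact hbR h
  · obtain ⟨x, _, hx2⟩ := Finset.mem_biUnion.1 h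
    have := (Finset.mem_filter.1 hx2).2.1
    rw [hb] at this
    exact absurd this (by simp)

lemma leaf_not_mem_Sfull {R : Finset A} (hR : R ⊆ rootsOf ℱ) {b : A}
    (hbR : b ∉ R) {a : A} (ha : a ∈ leavesOf ℱ b) : a ∉ SfullOf ℱ R := by
  rw [SfullOf, Finset.mem_union]
  have haleaf : ℱ.isRoot a = false := (Finset.mem_filter.1 ha).2.1
  have hapar : ℱ.parent a = b := (Finset.mem_filter.1 ha).2.2
  rintro (h | h)
  · have := (Finset.mem_filter.1 (hR h)).2
    rw [haleaf] at this
    exact absurd this (by simp)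
  · obtain ⟨x, hx1, hx2⟩ := Finset.mem_biUnion.1 h
    have := (Finset.mem_filter.1 hx2).2.2
    rw [hapar] at this
    rw [this] at hbR
    exact hbR hx1

lemma Sfull_insert {R : Finset A} {b : A} :
    SfullOf ℱ (insert b R) = insert b (SfullOf ℱ R) ∪ leavesOf ℱ b := by
  rw [SfullOf, SfullOf, Finset.biUnion_insert]
  ext x
  simp only [Finset.mem_union, Finset.mem_insert]
  tauto

/-- The main greedy loop over the stars. -/
lemma greedy_all {p β : ℝ}
    (hjum : ∀ i, IsJumbled (𝒢 i) p β) (hp : 0 < p) (hβ0 : 0 ≤ β)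
    (dbound : ℝ) (hdb : ∀ b ∈ rootsOf ℱ, ((leavesOf ℱ b).card : ℝ) ≤ dbound)
    (V' W : Finset V) (hWV' : W ⊆ V')
    (hV'c : (Fintype.card V : ℝ) - s ≤ V'.card)
    (hmargin : ∀ d : ℕ, (d : ℝ) ≤ dbound →
      (d : ℝ) + Real.sqrt t * β
        < p * ((Fintype.card V : ℝ) - s - W.card - Fintype.card A)) :
    ∀ (k : ℕ) (R₀ : Finset A) (φ : A → V), R₀ ⊆ rootsOf ℱ →
      (rootsOf ℱ \ R₀).card = k →
      GInv 𝒢 ℱ D s V' W (SfullOf ℱ R₀) φ →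
      ∃ φ', GInv 𝒢 ℱ D s V' W (SfullOf ℱ (rootsOf ℱ)) φ' := by
  classical
  intro k
  induction k with
  | zero =>
    intro R₀ φ hsub hcard hInv
    have : rootsOf ℱ ⊆ R₀ := by
      intro x hx
      by_contra hxR
      have hmem : x ∈ rootsOf ℱ \ R₀ := Finset.mem_sdiff.2 ⟨hx, hxR⟩
      rw [Finset.card_eq_zero] at hcard
      rw [hcard] at hmem
      exact absurd hmem (Finset.notMem_empty x)
    have hReq : R₀ = rootsOf ℱ := Finset.Subset.antisymm hsub this
    exact ⟨φ, hReq ▸ hInv⟩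
  | succ k ih =>
    intro R₀ φ hsub hcard hInv
    have hne : (rootsOf ℱ \ R₀).Nonempty := by
      rw [← Finset.card_pos, hcard]; omega
    obtain ⟨b, hb⟩ := hne
    rw [Finset.mem_sdiff] at hb
    obtain ⟨hbroots, hbR₀⟩ := hb
    have hbroot : ℱ.isRoot b = true := mem_rootsOf.1 hbroots
    set S₀ := SfullOf ℱ R₀ with hS₀
    set d := (leavesOf ℱ b).card with hd
    set Z := (V' \ W) \ S₀.image φ with hZ
    -- size of Z
    have hZcard : (Fintype.card V : ℝ) - s - W.card - Fintype.card A ≤ Z.card := by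
      have h1 : (V' \ W).card = V'.card - W.card := Finset.card_sdiff_of_subset hWV'
      have h1' : W.card ≤ V'.card := Finset.card_le_card hWV'
      have h2 : (V' \ W).card ≤ Z.card + (S₀.image φ).card := by
        calc (V' \ W).card ≤ (Z ∪ S₀.image φ).card := by
              apply Finset.card_le_card
              intro x hx
              rw [Finset.mem_union, hZ]
              by_cases hxi : x ∈ S₀.image φ
              · exact Or.inr hxi
              · exact Or.inl (Finset.mem_sdiff.2 ⟨hx, hxi⟩)
          _ ≤ Z.card + (S₀.image φ).card := Finset.card_union_le _ _
      have h3 : (S₀.image φ).card ≤ Fintype.card A :=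
        le_trans Finset.card_image_le (Finset.card_le_univ S₀)
      have h2' : ((V' \ W).card : ℝ) ≤ (Z.card : ℝ) + (S₀.image φ).card := by
        exact_mod_cast h2
      have h3' : ((S₀.image φ).card : ℝ) ≤ (Fintype.card A : ℝ) := by exact_mod_cast h3
      have h1'' : ((V' \ W).card : ℝ) = (V'.card : ℝ) - W.card := by
        rw [h1]
        have : (W.card : ℕ) ≤ V'.card := h1'
        push_cast [Nat.cast_sub this]
        ring
      linarith
    -- choose the root image
    have hmar : (d : ℝ) + Real.sqrt t * β < p * Z.card := by
      have h1 := hmargin d (hdb b hbroots)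
      have h2 : p * ((Fintype.card V : ℝ) - s - W.card - Fintype.card A) ≤ p * Z.card :=
        mul_le_mul_of_nonneg_left hZcard (le_of_lt hp)
      linarith
    obtain ⟨u, huZ, hupool⟩ := root_choice hjum hp hβ0 Z d hmar
    have huZ' := Finset.mem_sdiff.1 huZ
    -- insert the root
    have hbS₀ : b ∉ S₀ := not_mem_Sfull_of_root hsub hbroot hbR₀
    set φ₁ := Function.update φ b u with hφ₁
    have hInv₁ : GInv 𝒢 ℱ D s V' W (insert b S₀) φ₁ := by
      apply Inv_insert hInv b u hbS₀
      · intro h; rw [hbroot] at h; exact absurd h (by simp)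
      · intro h; rw [hbroot] at h; exact absurd h (by simp)
      · exact huZ'.1
      · exact huZ'.2
    set S₁ := insert b S₀ with hS₁
    set Im₀ := insert u (S₀.image φ) with hIm₀
    have hS₀img : S₀.image φ₁ = S₀.image φ := by
      apply Finset.image_congr
      intro x hx
      refine Function.update_of_ne ?_ u φ
      intro h
      rw [h] at hx
      exact hbS₀ hx
    have hφ₁b : φ₁ b = u := by rw [hφ₁]; exact Function.update_self b u φ
    have hIm₁ : S₁.image φ₁ = Im₀ := by
      rw [hS₁, Finset.image_insert, hS₀img, hIm₀, hφ₁b]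
    -- pools with respect to Im₀
    have hpools : ∀ c : Fin t,
        (leavesOf ℱ b).card + 1 ≤ (((V' \ W) \ Im₀).filter ((𝒢 c).Adj u)).card := by
      intro c
      have hset : ((V' \ W) \ Im₀).filter ((𝒢 c).Adj u) = Z.filter ((𝒢 c).Adj u) := by
        ext x
        simp only [Finset.mem_filter, Finset.mem_sdiff, hIm₀, Finset.mem_insert, hZ]
        constructor
        · rintro ⟨⟨h1, h2⟩, h3⟩
          exact ⟨⟨h1, fun hc => h2 (Or.inr hc)⟩, h3⟩
        · rintro ⟨⟨h1, h2⟩, h3⟩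
          refine ⟨⟨h1, ?_⟩, h3⟩
          rintro (rfl | hc)
          · exact (𝒢 c).irrefl h3
          · exact h2 hc
      rw [hset]
      exact hupool c
    -- fill the star
    have hnoleaf : ∀ a ∈ leavesOf ℱ b, a ∉ S₁ := by
      intro a haleaves
      rw [hS₁, Finset.mem_insert]
      have haleaf : ℱ.isRoot a = false := (Finset.mem_filter.1 haleaves).2.1
      rintro (rfl | h)
      · rw [hbroot] at haleaf; exact absurd haleaf (by simp)
      · exact leaf_not_mem_Sfull hsub hbR₀ haleaves h
    have hstart : GInv 𝒢 ℱ D s V' W (S₁ ∪ ∅) φ₁ := by rwa [Finset.union_empty]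
    obtain ⟨φ₂, hφ₂⟩ := star_fill V' W b u S₁ (Finset.mem_insert_self b S₀) hnoleaf Im₀
      hpools d ∅ φ₁ (Finset.empty_subset _) (by rw [Finset.sdiff_empty]) hIm₁
      hφ₁b hstart
    -- recurse
    have hshape : S₁ ∪ leavesOf ℱ b = SfullOf ℱ (insert b R₀) := by
      rw [Sfull_insert, hS₁]
    rw [hshape] at hφ₂
    apply ih (insert b R₀) φ₂ (Finset.insert_subset hbroots hsub) _ hφ₂
    rw [Finset.sdiff_insert, Finset.card_erase_of_mem (Finset.mem_sdiff.2 ⟨hbroots, hbR₀⟩),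
      hcard]
    omega

end S9








end

set_option maxHeartbeats 1600000 in
/-- Embedding a coloured star forest into a jumbled family: with
`s = 2√t β/p`, any `[t]`-edge-coloured star forest `ℱ` (roots the star centres)
with `Δ(ℱ) ≤ Δ ≤ (1−c)p|V|` and `|V(ℱ)| + 5sD < c|V|/2` has a `(2s,D)`-good
embedding into `𝒢` restricted to some `V'` with `|V'| ≥ |V| − s`. -/
theorem embed_star_forest {V A : Type*} [Fintype V] [Fintype A] {t : ℕ}
    (ht : 1 ≤ t) (c p β : ℝ) (D Δ : ℕ)
    (hc0 : 0 < c) (hc1 : c < 1) (hD : 3 ≤ D)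
    (hp0 : 0 < p) (hp1 : p < 1) (hβ : 1 ≤ β)
    (𝒢 : Fin t → SimpleGraph V) (hjum : ∀ i, IsJumbled (𝒢 i) p β)
    (hΔpos : 1 ≤ Δ) (hΔV : (Δ : ℝ) ≤ (1 - c) * p * (Fintype.card V : ℝ))
    (s : ℝ) (hsdef : s = 2 * Real.sqrt t * β / p)
    (ℱ : ColoredRootedGraph A t)
    (hdisj : ∀ i j, i ≠ j → Disjoint (ℱ.graph i).edgeSet (ℱ.graph j).edgeSet)
    -- ℱ is a star forest: each non-root (leaf) has total degree 1, and every edge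
    -- joins a root (star centre) to a non-root (leaf)
    (hleaf : ∀ a, ℱ.isRoot a = false → ∑ i, monDegOn ℱ.graph Finset.univ a i = 1)
    (hedge : ∀ i a b, (ℱ.graph i).Adj a b →
      (ℱ.isRoot a = true ∧ ℱ.isRoot b = false) ∨
      (ℱ.isRoot a = false ∧ ℱ.isRoot b = true))
    (hΔF : ∀ a, ∑ i, monDegOn ℱ.graph Finset.univ a i ≤ Δ)
    (hcard : (Fintype.card A : ℝ) + 5 * s * D < c * (Fintype.card V : ℝ) / 2) :
    ∃ V' : Finset V, (Fintype.card V : ℝ) - s ≤ V'.card ∧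
      ∃ φ : A → V, IsColEmbedding 𝒢 ℱ.graph φ ∧ (∀ a, φ a ∈ V') ∧
        IsGood 𝒢 V' ℱ Finset.univ φ (2 * s) D := by
  classical
  -- basic quantities
  set n : ℕ := Fintype.card V with hn
  set m : ℕ := Fintype.card A with hm
  have hβ0 : (0:ℝ) ≤ β := le_trans zero_le_one hβ
  have hp0' : p ≠ 0 := ne_of_gt hp0
  have hst1 : (1:ℝ) ≤ Real.sqrt t := by
    rw [show (1:ℝ) = Real.sqrt 1 by rw [Real.sqrt_one]]
    exact Real.sqrt_le_sqrt (by exact_mod_cast ht)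
  have hst0 : (0:ℝ) ≤ Real.sqrt t := le_trans zero_le_one hst1
  have hs0 : 0 < s := by
    rw [hsdef]
    positivity
  have hs2 : 2 ≤ s := by
    rw [hsdef]
    rw [le_div_iff₀ hp0]
    nlinarith
  have hstβ : Real.sqrt t * β = s * p / 2 := by
    rw [hsdef]
    field_simp
  have hseq : (t : ℝ) * (β ^ 2 / p ^ 2) = s ^ 2 / 4 := by
    have h1 : (Real.sqrt t * β) ^ 2 = (s * p / 2) ^ 2 := by rw [hstβ]
    rw [mul_pow, Real.sq_sqrt (Nat.cast_nonneg t)] at h1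
    field_simp at h1 ⊢
    nlinarith [h1]
  have hD3 : (3:ℝ) ≤ (D:ℝ) := by exact_mod_cast hD
  have hm0 : (0:ℝ) ≤ (m:ℝ) := Nat.cast_nonneg _
  have hsD : (0:ℝ) < 5 * s * D := by positivity
  have hcn2 : (0:ℝ) < c * n / 2 := by linarith [hcard, hsD, hm0]
  have hn0 : (0:ℝ) < (n:ℝ) := by
    by_contra hc'
    push_neg at hc'
    nlinarith
  -- the seed set W₀
  set w : ℕ := ⌈(3 * (D:ℝ) + 3.5) * s⌉₊ with hw
  have hwlow : (3 * (D:ℝ) + 3.5) * s ≤ (w:ℝ) := Nat.le_ceil _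
  have hwup : (w:ℝ) ≤ (3 * (D:ℝ) + 3.5) * s + 1 := by
    rw [hw]
    exact le_of_lt (Nat.ceil_lt_add_one (by positivity))
  have hwn : w ≤ n := by
    have h5 : (3 * (D:ℝ) + 3.5) * s + 1 ≤ 5 * s * D := by nlinarith
    have hcnn : c * n / 2 ≤ n / 2 := by nlinarith
    have : (w:ℝ) < (n:ℝ) := by
      have h6 : 5 * s * (D:ℝ) < c * n / 2 := by linarith [hcard, hm0]
      linarith
    exact_mod_cast le_of_lt this
  obtain ⟨W₀, hW₀sub, hW₀card⟩ := Finset.exists_subset_card_eq (s := (Finset.univ : Finset V)) (n := w)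
    (by rwa [Finset.card_univ])
  have hW₀low : (3 * (D:ℝ) + 3.25) * s < (W₀.card : ℝ) := by
    rw [hW₀card]
    nlinarith
  -- the removal
  obtain ⟨R, hRcard, hbase'⟩ := removal_main hjum hp0 hβ0 hs0 hseq W₀ hW₀low
  set V' : Finset V := Finset.univ \ R with hV'
  set W : Finset V := W₀ \ R with hW
  have hWV' : W ⊆ V' := by
    intro x hx
    rw [hW, Finset.mem_sdiff] at hx
    rw [hV', Finset.mem_sdiff]
    exact ⟨Finset.mem_univ _, hx.2⟩
  have hV'card : (n:ℝ) - s ≤ (V'.card : ℝ) := by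
    have h1 : V'.card = n - R.card := by
      rw [hV', Finset.card_sdiff_of_subset (Finset.subset_univ R), Finset.card_univ, hn]
    have h2 : R.card ≤ n := by
      rw [hn]
      exact Finset.card_le_univ R
    rw [h1]
    push_cast [Nat.cast_sub h2]
    linarith
  have hWcard : (W.card : ℝ) ≤ (w : ℝ) := by
    rw [← hW₀card]
    exact_mod_cast Finset.card_le_card (Finset.sdiff_subset)
  -- the margin estimate for root choices
  have hmargin : ∀ d : ℕ, (d : ℝ) ≤ (Δ:ℝ) →
      (d : ℝ) + Real.sqrt t * β < p * ((n : ℝ) - s - W.card - m) := by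
    intro d hdΔ
    have h1 : (d:ℝ) + Real.sqrt t * β ≤ (1 - c) * p * n + s * p / 2 := by
      rw [hstβ]
      have := le_trans hdΔ hΔV
      linarith
    have h2 : (1 - c) * (n:ℝ) + s / 2 < (n : ℝ) - s - W.card - m := by
      have hmlt : (m:ℝ) + 5 * s * D < c * n / 2 := hcard
      nlinarith [hWcard, hwup, hD3, hs2, hcn2]
    have h3 : p * ((1 - c) * (n:ℝ) + s / 2) < p * ((n : ℝ) - s - W.card - m) :=
      mul_lt_mul_of_pos_left h2 hp0
    calc (d : ℝ) + Real.sqrt t * β ≤ (1 - c) * p * n + s * p / 2 := h1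
      _ = p * ((1 - c) * (n:ℝ) + s / 2) := by ring
      _ < p * ((n : ℝ) - s - W.card - m) := h3
  -- the initial invariant
  have hnposℕ : 0 < n := by exact_mod_cast hn0
  have hnV : Nonempty V := Fintype.card_pos_iff.mp (by rw [← hn]; exact hnposℕ)
  set φ₀ : A → V := fun _ => Classical.arbitrary V with hφ₀
  have hbase : ∀ X : Finset (V × Fin t), (∀ q ∈ X, q.1 ∈ V') → (X.card : ℝ) ≤ 2 * s →
      0 ≤ Rfun 𝒢 W ℱ (∅ : Finset A) φ₀ D X := by
    intro X hXV hX2s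
    rw [Rfun_base]
    have h1 : ((D * X.card : ℝ)) ≤ ((famNbhd 𝒢 X ∩ (W₀ \ R)).card : ℝ) := by
      apply hbase' X hX2s
      intro q hq
      have := hXV q hq
      rw [hV', Finset.mem_sdiff] at this
      exact this.2
    rw [← hW] at h1
    have h2 : (D * X.card : ℤ) ≤ ((famNbhd 𝒢 X ∩ W).card : ℤ) := by exact_mod_cast h1
    linarith
  have hInv0 : GInv 𝒢 ℱ D s V' W (SfullOf ℱ (∅ : Finset A)) φ₀ := by
    have hSempty : SfullOf ℱ (∅ : Finset A) = ∅ := by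
      rw [SfullOf]
      simp
    rw [hSempty]
    refine ⟨?_, ?_, ?_, ?_, hbase⟩
    · intro x hx; simp at hx
    · intro a ha; simp at ha
    · intro a ha; simp at ha
    · intro a ha; simp at ha
  -- the greedy embedding
  have hdb : ∀ b ∈ rootsOf ℱ, ((leavesOf ℱ b).card : ℝ) ≤ (Δ : ℝ) := by
    intro b hb
    have hbroot := mem_rootsOf.1 hb
    have h1 := card_leavesOf hleaf hedge hbroot
    have h2 := hΔF b
    rw [h1]
    exact_mod_cast h2
  obtain ⟨φ', hφ'⟩ := greedy_all hjum hp0 hβ0 (Δ:ℝ) hdb V' W hWV' (by rw [← hn]; exact hV'card)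
    (by rw [← hn, ← hm]; exact hmargin) (rootsOf ℱ \ ∅).card ∅ φ₀ (Finset.empty_subset _)
    rfl hInv0
  -- the full vertex set is covered
  have hSfull : SfullOf ℱ (rootsOf ℱ) = Finset.univ := by
    apply Finset.eq_univ_of_forall
    intro a
    rw [SfullOf, Finset.mem_union]
    by_cases ha : ℱ.isRoot a = true
    · exact Or.inl (mem_rootsOf.2 ha)
    · have haleaf : ℱ.isRoot a = false := by
        cases h : ℱ.isRoot a
        · rfl
        · exact absurd h ha
      refine Or.inr (Finset.mem_biUnion.2 ⟨ℱ.parent a, mem_rootsOf.2 (parent_root hedge haleaf),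
        ?_⟩)
      rw [leavesOf, Finset.mem_filter]
      exact ⟨Finset.mem_univ _, haleaf, rfl⟩
  rw [hSfull] at hφ'
  obtain ⟨hinj, himg, hadj, hpar, hgood⟩ := hφ'
  -- conclusion
  refine ⟨V', hV'card, φ', ⟨?_, ?_⟩, ?_, ?_⟩
  · -- injectivity
    intro x y hxy
    exact hinj (by simp) (by simp) hxy
  · -- edges are preserved
    intro i a b hab
    rcases hedge i a b hab with ⟨haroot, hbleaf⟩ | ⟨haleaf, hbroot⟩
    · obtain ⟨hparb, hpcb⟩ := leaf_unique_edge hleaf hbleaf hab.symm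
      have := hadj b (Finset.mem_univ b) hbleaf
      rw [hparb, hpcb] at this
      exact this.symm
    · obtain ⟨hpara, hpca⟩ := leaf_unique_edge hleaf haleaf hab
      have := hadj a (Finset.mem_univ a) haleaf
      rw [hpara, hpca] at this
      exact this
  · -- images in V'
    intro a
    have := himg a (Finset.mem_univ a)
    exact (Finset.mem_sdiff.1 this).1
  · -- goodness
    intro X hXV hX2s
    have h1 := hgood X hXV hX2s
    have h2 := Rfun_W_le W V' hWV' Finset.univ φ' X (𝒢 := 𝒢) (ℱ := ℱ) (D := D)
    linarith
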